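/- Fix N ∈ ℕ and a finite sequence x_0, …, x_{N−1} ∈ S such that (i) n(s,N) ∈ {⌊f(s)·N⌋, ⌊f(s)·N⌋ + 1} for every s ∈ S, and (ii) Σ_{s∈S} max{0, ⌊f(s)·M⌋ − n(s,N)} ≤ M − N for every integer M ≥ N. Let E = {M ∈ ℤ : M > N and Σ_{s∈S} max{0, ⌊f(s)·M⌋ − n(s,N)} = M − N}. Suppose t ∈ S satisfies: n(t,N) = ⌊f(t)·N⌋ or ⌊f(t)·(N+1)⌋ = ⌊f(t)·N⌋ + 1; and, in case E is nonempty with minimum M_N, also ⌊f(t)·M_N⌋ ≥ n(t,N) + 1. Then t ∈ T(N). -/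
import Mathlib


open Finset

/-- The number of occurrences of the symbol `s` among the first `N` terms of `x`. -/
def nOcc {S : Type*} [DecidableEq S] (x : ℕ → S) (s : S) (N : ℕ) : ℕ :=
  ((Finset.range N).filter fun k => x k = s).card

/-- The set `T(N)` of allowed symbols at step `N`. -/
def TSet {S : Type*} [Fintype S] [DecidableEq S] (f : S → ℝ) (x : ℕ → S) (N : ℕ) : Set S :=
  {t | ((nOcc x t N : ℤ) = ⌊f t * (N : ℝ)⌋ ∨ ⌊f t * ((N : ℝ) + 1)⌋ = ⌊f t * (N : ℝ)⌋ + 1) ∧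
    ∀ M : ℤ, (N : ℤ) < M →
      ∑ s, max 0 (⌊f s * (M : ℝ)⌋ - (nOcc x s N : ℤ) - if s = t then 1 else 0)
        ≤ M - (N : ℤ) - 1}


theorem stmt_6 {S : Type*} [Fintype S] [DecidableEq S] [Nonempty S]
    (f : S → ℝ) (hf0 : ∀ s, 0 < f s) (hf1 : ∀ s, f s ≤ 1)
    (hsum : ∑ s, f s = 1)
    (N : ℕ) (x : ℕ → S)
    (h1 : ∀ s : S,
      (nOcc x s N : ℤ) = ⌊f s * (N : ℝ)⌋ ∨ (nOcc x s N : ℤ) = ⌊f s * (N : ℝ)⌋ + 1)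
    (h2 : ∀ M : ℤ, (N : ℤ) ≤ M →
      ∑ s, max 0 (⌊f s * (M : ℝ)⌋ - (nOcc x s N : ℤ)) ≤ M - (N : ℤ))
    (t : S)
    (ht1 : (nOcc x t N : ℤ) = ⌊f t * (N : ℝ)⌋ ∨ ⌊f t * ((N : ℝ) + 1)⌋ = ⌊f t * (N : ℝ)⌋ + 1)
    (ht2 : ∀ MN : ℤ,
      IsLeast {M : ℤ | (N : ℤ) < M ∧
          ∑ s, max 0 (⌊f s * (M : ℝ)⌋ - (nOcc x s N : ℤ)) = M - (N : ℤ)} MN →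
      (nOcc x t N : ℤ) + 1 ≤ ⌊f t * (MN : ℝ)⌋) :
    t ∈ TSet f x N := by
  refine ⟨ht1, fun M hM => ?_⟩
  rcases lt_or_eq_of_le (h2 M hM.le) with hlt | heq
  · calc ∑ s, max 0 (⌊f s * (M : ℝ)⌋ - (nOcc x s N : ℤ) - if s = t then 1 else 0)
        ≤ ∑ s, max 0 (⌊f s * (M : ℝ)⌋ - (nOcc x s N : ℤ)) := by
          apply Finset.sum_le_sum
          intro s _
          apply max_le_max le_rfl
          split <;> omega
      _ ≤ M - (N : ℤ) - 1 := by omega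
  · -- equality case: M is in the set E
    classical
    set P : ℤ → Prop := fun M' => (N : ℤ) < M' ∧
      ∑ s, max 0 (⌊f s * (M' : ℝ)⌋ - (nOcc x s N : ℤ)) = M' - (N : ℤ) with hP
    obtain ⟨MN, hMNP, hMNle⟩ := Int.exists_least_of_bdd (P := P)
      ⟨(N : ℤ), fun z hz => hz.1.le⟩ ⟨M, hM, heq⟩
    have hleast : IsLeast {M : ℤ | (N : ℤ) < M ∧
        ∑ s, max 0 (⌊f s * (M : ℝ)⌋ - (nOcc x s N : ℤ)) = M - (N : ℤ)} MN :=
      ⟨hMNP, fun z hz => hMNle z hz⟩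
    have hft := ht2 MN hleast
    have hMNM : MN ≤ M := hMNle M ⟨hM, heq⟩
    have hfloor : ⌊f t * (MN : ℝ)⌋ ≤ ⌊f t * (M : ℝ)⌋ := by
      apply Int.floor_le_floor
      apply mul_le_mul_of_nonneg_left _ (hf0 t).le
      exact_mod_cast hMNM
    have hat : (nOcc x t N : ℤ) + 1 ≤ ⌊f t * (M : ℝ)⌋ := le_trans hft hfloor
    have key : ∀ s : S, max 0 (⌊f s * (M : ℝ)⌋ - (nOcc x s N : ℤ) - if s = t then 1 else 0)
        = max 0 (⌊f s * (M : ℝ)⌋ - (nOcc x s N : ℤ)) - (if s = t then 1 else 0) := by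
      intro s
      by_cases hs : s = t
      · subst hs; simp only [if_pos rfl]; omega
      · simp [hs]
    rw [Finset.sum_congr rfl (fun s _ => key s), Finset.sum_sub_distrib, heq,
      Finset.sum_ite_eq' Finset.univ t (fun _ => (1 : ℤ)), if_pos (Finset.mem_univ t)]
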